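/- Consider the query q_perm ← R(x,y), R(y,x) over a single binary endogenous relation R. For every database D with D ⊨ q_perm, the resilience ρ(q_perm, D) equals the number of unordered pairs {a,b} of domain elements (allowing a = b) such that both (a,b) ∈ R and (b,a) ∈ R. -/

import Mathlib

/-!
STATEMENT 14.
Query `q_perm ← R(x,y), R(y,x)` over a single binary endogenous relation `R`.
For every database `R` satisfying the query, the resilience equals the number
of unordered pairs `{a,b}` (allowing `a = b`) with both `(a,b) ∈ R` and
`(b,a) ∈ R`; these pairs are counted as elements of `Sym2 α`.
-/
theorem stmt_14 {α : Type} [DecidableEq α]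
    (R : Finset (α × α))
    (hsat : ∃ a b, (a, b) ∈ R ∧ (b, a) ∈ R) :
    sInf {c : ℕ | ∃ Γ : Finset (α × α), Γ ⊆ R ∧
        (¬ ∃ a b, (a, b) ∈ R \ Γ ∧ (b, a) ∈ R \ Γ) ∧ Γ.card = c} =
    ((R.filter (fun t => (t.2, t.1) ∈ R)).image (Function.uncurry Sym2.mk)).card := by
  classical
  set S : Finset (α × α) := R.filter (fun t => (t.2, t.1) ∈ R) with hS
  have hSmem : ∀ t : α × α, t ∈ S ↔ t ∈ R ∧ (t.2, t.1) ∈ R := by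
    intro t; simp [hS]
  have hSsym : ∀ t : α × α, t ∈ S → (t.2, t.1) ∈ S := by
    intro t ht
    rcases (hSmem t).1 ht with ⟨h1, h2⟩
    exact (hSmem _).2 ⟨h2, h1⟩
  -- the chosen contingency set: one representative per Sym2 class
  set Γ : Finset (α × α) := (S.image (Function.uncurry Sym2.mk)).image Quot.out with hΓ
  have houtmk : ∀ s : Sym2 α, (Function.uncurry Sym2.mk) (Quot.out s) = s := by
    intro s; exact Quot.out_eq s
  have hΓmem : ∀ p : α × α, p ∈ Γ ↔ ∃ t ∈ S, p = Quot.out ((Function.uncurry Sym2.mk) t) := by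
    intro p
    simp only [hΓ, Finset.mem_image]
    constructor
    · rintro ⟨s, ⟨t, ht, rfl⟩, rfl⟩
      exact ⟨t, ht, rfl⟩
    · rintro ⟨t, ht, rfl⟩
      exact ⟨(Function.uncurry Sym2.mk) t, ⟨t, ht, rfl⟩, rfl⟩
  have hΓS : Γ ⊆ S := by
    intro p hp
    rcases (hΓmem p).1 hp with ⟨t, ht, rfl⟩
    have h := houtmk ((Function.uncurry Sym2.mk) t)
    have := Sym2.mk_eq_mk_iff.1 h
    rcases this with h1 | h1
    · rw [h1]; exact ht
    · rw [h1]; exact hSsym t ht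
  have hΓR : Γ ⊆ R := fun p hp => Finset.mem_filter.1 (hΓS hp) |>.1
  have hout_inj : Function.Injective (Quot.out : Sym2 α → α × α) := by
    intro s s' h
    rw [← houtmk s, ← houtmk s', h]
  have hΓcard : Γ.card = (S.image (Function.uncurry Sym2.mk)).card := by
    rw [hΓ, Finset.card_image_of_injective _ hout_inj]
  -- Γ destroys the query
  have hΓgood : ¬ ∃ a b, (a, b) ∈ R \ Γ ∧ (b, a) ∈ R \ Γ := by
    rintro ⟨a, b, hab, hba⟩
    have h1 := Finset.mem_sdiff.1 hab
    have h2 := Finset.mem_sdiff.1 hba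
    have htS : (a, b) ∈ S := (hSmem _).2 ⟨h1.1, h2.1⟩
    have hoG : Quot.out ((Function.uncurry Sym2.mk) (a, b)) ∈ Γ := (hΓmem _).2 ⟨(a, b), htS, rfl⟩
    have h := houtmk ((Function.uncurry Sym2.mk) (a, b))
    rcases Sym2.mk_eq_mk_iff.1 h with h1' | h1'
    · rw [h1'] at hoG; exact h1.2 hoG
    · rw [h1'] at hoG; exact h2.2 hoG
  -- lower bound: any valid Γ' has card ≥ card of the Sym2 image
  have hlb : ∀ Γ' : Finset (α × α),
      (¬ ∃ a b, (a, b) ∈ R \ Γ' ∧ (b, a) ∈ R \ Γ') →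
      (S.image (Function.uncurry Sym2.mk)).card ≤ Γ'.card := by
    intro Γ' hΓ'
    have hsub : S.image (Function.uncurry Sym2.mk) ⊆ Γ'.image (Function.uncurry Sym2.mk) := by
      intro s hs
      rcases Finset.mem_image.1 hs with ⟨t, ht, rfl⟩
      rcases (hSmem t).1 ht with ⟨h1, h2⟩
      by_cases hc : t ∈ Γ'
      · exact Finset.mem_image_of_mem _ hc
      · have hc2 : (t.2, t.1) ∈ Γ' := by
          by_contra hc2
          exact hΓ' ⟨t.1, t.2, Finset.mem_sdiff.2 ⟨h1, hc⟩,
            Finset.mem_sdiff.2 ⟨h2, hc2⟩⟩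
        have : (Function.uncurry Sym2.mk) (t.2, t.1) = (Function.uncurry Sym2.mk) t := by
          exact Sym2.mk_eq_mk_iff.2 (Or.inr rfl)
        exact this ▸ Finset.mem_image_of_mem _ hc2
    calc (S.image (Function.uncurry Sym2.mk)).card ≤ (Γ'.image (Function.uncurry Sym2.mk)).card :=
          Finset.card_le_card hsub
      _ ≤ Γ'.card := Finset.card_image_le
  apply le_antisymm
  · exact Nat.sInf_le ⟨Γ, hΓR, hΓgood, hΓcard⟩
  · refine le_csInf ⟨Γ.card, ?_⟩ ?_
    · exact ⟨Γ, hΓR, hΓgood, rfl⟩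
    rintro c ⟨Γ', _, hgood, rfl⟩
    exact hlb Γ' hgood
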